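/- Let r > 1 and let f be holomorphic on the annulus 𝔸_r. Suppose a : ℤ → ℂ is such that for every z ∈ 𝔸_r the family (a_n zⁿ)_{n ∈ ℤ} is summable with sum f(z) (the Laurent expansion of f on 𝔸_r). Then, as an equality of values in [0, ∞], ∬_{𝔸_r} |f(z)|² (1 − |z|²)² dA(z) = 2π · Σ_{n ∈ ℤ} |a_n|² I_n(r). -/

import Mathlib

open MeasureTheory Complex Metric

/-- The annulus `𝔸_r = {z : 1 < |z| < r}`. -/
def annulus (r : ℝ) : Set ℂ := {z : ℂ | 1 < ‖z‖ ∧ ‖z‖ < r}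

/-- `I_n(r) = (1/2) ∫_1^{r²} ρⁿ (1-ρ)² dρ`. -/
noncomputable def laurentI (n : ℤ) (r : ℝ) : ℝ :=
  (1 / 2) * ∫ ρ in (1:ℝ)..(r ^ 2), ρ ^ n * (1 - ρ) ^ 2

open Set
open scoped ENNReal NNReal

noncomputable section
namespace Stmt0Aux

lemma summable_sq {c : ℤ → ℂ} (hc : Summable fun n => ‖c n‖) :
    Summable fun n => ‖c n‖ ^ 2 := by
  refine Summable.of_norm_bounded_eventually hc ?_
  filter_upwards [hc.tendsto_cofinite_zero.eventually_lt_const one_pos] with n h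
  have h0 : (0:ℝ) ≤ ‖c n‖ := norm_nonneg _
  rw [Real.norm_eq_abs, _root_.abs_of_nonneg (by positivity)]
  nlinarith

lemma integral_exp_int (k : ℤ) :
    (∫ θ in (-Real.pi)..Real.pi, Complex.exp (k * θ * Complex.I))
      = if k = 0 then (2 * Real.pi : ℂ) else 0 := by
  rcases eq_or_ne k 0 with hk | hk
  · simp [hk, two_mul]
  · rw [if_neg hk]
    have hc : (k : ℂ) * Complex.I ≠ 0 := by
      simp [Complex.I_ne_zero, Int.cast_eq_zero, hk]
    have h0 : (∫ θ in (-Real.pi)..Real.pi, Complex.exp ((k * Complex.I) * θ))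
        = (Complex.exp ((k * Complex.I) * Real.pi)
            - Complex.exp ((k * Complex.I) * ((-Real.pi : ℝ) : ℂ))) / (k * Complex.I) :=
      integral_exp_mul_complex hc
    rw [show (fun θ : ℝ => Complex.exp ((k:ℂ) * θ * Complex.I))
        = fun θ : ℝ => Complex.exp ((k * Complex.I) * θ) by funext θ; ring_nf]
    rw [h0]
    have hs : Complex.sin (k * Real.pi) = 0 := Complex.sin_int_mul_pi k
    have h1 : (k : ℂ) * Complex.I * Real.pi = (k * Real.pi) * Complex.I := by ring
    have h2 : (k : ℂ) * Complex.I * ((-Real.pi : ℝ) : ℂ) = (-(k * Real.pi)) * Complex.I := by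
      push_cast; ring
    rw [h1, h2, Complex.exp_mul_I, Complex.exp_mul_I, Complex.cos_neg, Complex.sin_neg, hs]
    ring

lemma norm_exp_I (k : ℤ) (θ : ℝ) : ‖Complex.exp ((k:ℂ) * θ * Complex.I)‖ = 1 := by
  rw [Complex.norm_exp]; simp

/-- Parseval on the circle, for everywhere-convergent Fourier series. -/
lemma parseval (c : ℤ → ℂ) (g : ℝ → ℂ) (hg : Continuous g)
    (hsum : ∀ θ : ℝ, HasSum (fun n : ℤ => c n * Complex.exp (n * θ * Complex.I)) (g θ)) :
    ∫ θ in Set.Ioo (-Real.pi) Real.pi, ‖g θ‖ ^ 2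
      = 2 * Real.pi * ∑' n : ℤ, ‖c n‖ ^ 2 := by
  have hπ : (0:ℝ) < Real.pi := Real.pi_pos
  set s : Set ℝ := Set.Ioo (-Real.pi) Real.pi with hs_def
  have hvol : volume s = ENNReal.ofReal (2 * Real.pi) := by
    rw [hs_def, Real.volume_Ioo]; ring_nf
  have hcsum : Summable c := by
    have := (hsum 0).summable
    simpa using this
  have hc : Summable fun n => ‖c n‖ := summable_norm_iff.mpr hcsum
  have hecont : ∀ k : ℤ, Continuous fun θ : ℝ => Complex.exp ((k:ℂ) * θ * Complex.I) := by
    intro k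
    exact Complex.continuous_exp.comp ((continuous_const.mul Complex.continuous_ofReal).mul
      continuous_const)
  obtain ⟨M, hM⟩ := (isCompact_Icc (a := -Real.pi) (b := Real.pi)).exists_bound_of_continuousOn
    hg.continuousOn
  have hM0 : 0 ≤ M := le_trans (norm_nonneg (g 0)) (hM 0 (by constructor <;> linarith))
  have hMs : ∀ θ ∈ s, ‖g θ‖ ≤ M := fun θ hθ => hM θ (Set.Ioo_subset_Icc_self hθ)
  have hbound : ∀ (b : ℤ → ℝ) (F : ℤ → ℝ → ℂ), (∀ n, 0 ≤ b n) →
      (∀ n, ∀ θ ∈ s, ‖F n θ‖ ≤ b n) → Summable b →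
      (∑' n : ℤ, ∫⁻ θ in s, ‖F n θ‖₊ ∂volume) ≠ ⊤ := by
    intro b F hb0 hF hb
    have hle : ∀ n : ℤ, (∫⁻ θ in s, (‖F n θ‖₊ : ℝ≥0∞))
        ≤ ENNReal.ofReal (b n) * ENNReal.ofReal (2*Real.pi) := by
      intro n
      calc ∫⁻ θ in s, (‖F n θ‖₊:ℝ≥0∞)
          ≤ ∫⁻ _ in s, ENNReal.ofReal (b n) := by
            refine setLIntegral_mono measurable_const (fun θ hθ => ?_)
            rw [← ENNReal.ofReal_coe_nnreal, coe_nnnorm]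
            exact ENNReal.ofReal_le_ofReal (hF n θ hθ)
        _ = ENNReal.ofReal (b n) * volume s := setLIntegral_const _ _
        _ = _ := by rw [hvol]
    refine ne_top_of_le_ne_top ?_ (ENNReal.tsum_le_tsum hle)
    rw [ENNReal.tsum_mul_right]
    refine ENNReal.mul_ne_top ?_ ENNReal.ofReal_ne_top
    rw [← ENNReal.ofReal_tsum_of_nonneg hb0 hb]
    exact ENNReal.ofReal_ne_top
  have hconjexp : ∀ (m : ℤ) (θ : ℝ), (starRingEnd ℂ) (Complex.exp ((m:ℂ)*θ*Complex.I))
      = Complex.exp (-((m:ℂ)*θ*Complex.I)) := by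
    intro m θ
    rw [← Complex.exp_conj]
    congr 1
    simp [map_mul, Complex.conj_I, Complex.conj_ofReal]
  have stepA : ∀ n : ℤ, (∫ θ in s, Complex.exp ((n:ℂ) * θ * Complex.I) * (starRingEnd ℂ) (g θ))
      = (2 * Real.pi : ℂ) * (starRingEnd ℂ) (c n) := by
    intro n
    have hA : ∀ θ : ℝ, HasSum
        (fun m : ℤ => (starRingEnd ℂ) (c m) * Complex.exp (((n - m : ℤ) : ℂ) * θ * Complex.I))
        (star (g θ) * Complex.exp ((n:ℂ) * θ * Complex.I)) := by
      intro θ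
      have h1 := ((hsum θ).star).mul_right (Complex.exp ((n:ℂ) * θ * Complex.I))
      have h2 : (fun m : ℤ => (starRingEnd ℂ) (c m) * Complex.exp (((n - m : ℤ):ℂ) * θ * Complex.I))
          = fun m : ℤ => star (c m * Complex.exp ((m:ℂ) * θ * Complex.I))
              * Complex.exp ((n:ℂ) * θ * Complex.I) := by
        funext m
        have hst : (star (Complex.exp ((m:ℂ)*θ*Complex.I)) : ℂ)
            = Complex.exp (-((m:ℂ)*θ*Complex.I)) := hconjexp m θ
        have hexp : Complex.exp (-((m:ℂ)*θ*Complex.I)) * Complex.exp ((n:ℂ)*θ*Complex.I)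
            = Complex.exp (((n - m : ℤ):ℂ) * θ * Complex.I) := by
          rw [← Complex.exp_add]; congr 1; push_cast; ring
        rw [star_mul']
        conv_rhs => rw [hst, mul_assoc, hexp]
        rfl
      rw [h2]
      exact h1
    calc (∫ θ in s, Complex.exp ((n:ℂ) * θ * Complex.I) * (starRingEnd ℂ) (g θ))
        = ∫ θ in s, ∑' m : ℤ, (starRingEnd ℂ) (c m)
            * Complex.exp (((n - m : ℤ):ℂ) * θ * Complex.I) := by
          refine integral_congr_ae (Filter.Eventually.of_forall fun θ => ?_)
          exact (mul_comm _ _).trans ((hA θ).tsum_eq).symm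
      _ = ∑' m : ℤ, ∫ θ in s, (starRingEnd ℂ) (c m)
            * Complex.exp (((n - m : ℤ):ℂ) * θ * Complex.I) := by
          refine integral_tsum (fun m => ?_) ?_
          · exact ((continuous_const.mul (hecont _))).aestronglyMeasurable
          · refine hbound (fun m => ‖c m‖) _ (fun m => norm_nonneg _) (fun m θ _ => ?_) hc
            rw [norm_mul, norm_exp_I]
            simp
      _ = ∑' m : ℤ, (starRingEnd ℂ) (c m)
            * ∫ θ in s, Complex.exp (((n - m : ℤ):ℂ) * θ * Complex.I) := by
          simp only [integral_const_mul]
      _ = ∑' m : ℤ, (if m = n then (2 * Real.pi : ℂ) * (starRingEnd ℂ) (c n) else 0) := by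
          congr 1; funext m
          have : (∫ θ in s, Complex.exp (((n - m : ℤ):ℂ) * θ * Complex.I))
              = if (n - m : ℤ) = 0 then (2*Real.pi:ℂ) else 0 := by
            rw [hs_def, ← integral_Ioc_eq_integral_Ioo,
              ← intervalIntegral.integral_of_le (by linarith)]
            exact integral_exp_int _
          rw [this]
          rcases eq_or_ne m n with h | h
          · rw [if_pos h, if_pos (by omega), h, mul_comm]
          · rw [if_neg h, if_neg (by omega), mul_zero]
      _ = (2 * Real.pi : ℂ) * (starRingEnd ℂ) (c n) := tsum_ite_eq n _
  have stepB : (∫ θ in s, g θ * (starRingEnd ℂ) (g θ))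
      = (2 * Real.pi : ℂ) * ∑' n : ℤ, ((‖c n‖^2 : ℝ) : ℂ) := by
    calc (∫ θ in s, g θ * (starRingEnd ℂ) (g θ))
        = ∫ θ in s, ∑' n : ℤ, c n * Complex.exp ((n:ℂ) * θ * Complex.I)
            * (starRingEnd ℂ) (g θ) := by
          refine integral_congr_ae (Filter.Eventually.of_forall fun θ => ?_)
          exact (((hsum θ).mul_right _).tsum_eq).symm
      _ = ∑' n : ℤ, ∫ θ in s, c n * Complex.exp ((n:ℂ) * θ * Complex.I)
            * (starRingEnd ℂ) (g θ) := by
          refine integral_tsum (fun n => ?_) ?_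
          · exact ((continuous_const.mul (hecont _)).mul
              (Complex.continuous_conj.comp hg)).aestronglyMeasurable
          · refine hbound (fun n => ‖c n‖ * M) _ (fun n => mul_nonneg (norm_nonneg _) hM0)
              (fun n θ hθ => ?_) (hc.mul_right M)
            rw [norm_mul, norm_mul, norm_exp_I, mul_one]
            have := hMs θ hθ
            have h2 : ‖(starRingEnd ℂ) (g θ)‖ = ‖g θ‖ := by simp
            rw [h2]
            exact mul_le_mul_of_nonneg_left this (norm_nonneg _)
      _ = ∑' n : ℤ, c n * ∫ θ in s, Complex.exp ((n:ℂ) * θ * Complex.I)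
            * (starRingEnd ℂ) (g θ) := by
          simp only [mul_assoc]
          congr 1; funext n
          exact integral_const_mul _ _
      _ = ∑' n : ℤ, c n * ((2 * Real.pi : ℂ) * (starRingEnd ℂ) (c n)) := by
          congr 1; funext n; rw [stepA n]
      _ = (2 * Real.pi : ℂ) * ∑' n : ℤ, ((‖c n‖^2 : ℝ) : ℂ) := by
          rw [← tsum_mul_left]
          congr 1; funext n
          have : c n * (starRingEnd ℂ) (c n) = ((‖c n‖^2 : ℝ) : ℂ) := by
            rw [Complex.mul_conj]; norm_cast; rw [← Complex.sq_norm]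
          calc c n * ((2 * Real.pi : ℂ) * (starRingEnd ℂ) (c n))
              = (2 * Real.pi : ℂ) * (c n * (starRingEnd ℂ) (c n)) := by ring
            _ = (2 * Real.pi : ℂ) * ((‖c n‖^2 : ℝ) : ℂ) := by rw [this]
  have hfinal : ((∫ θ in s, ‖g θ‖ ^ 2 : ℝ) : ℂ)
      = (((2 * Real.pi) * ∑' n : ℤ, ‖c n‖^2 : ℝ) : ℂ) := by
    calc ((∫ θ in s, ‖g θ‖ ^ 2 : ℝ) : ℂ)
        = ∫ θ in s, ((‖g θ‖ ^ 2 : ℝ) : ℂ) := (integral_ofReal).symm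
      _ = ∫ θ in s, g θ * (starRingEnd ℂ) (g θ) := by
          refine integral_congr_ae (Filter.Eventually.of_forall fun θ => ?_)
          dsimp only
          symm
          rw [Complex.mul_conj]; norm_cast; rw [← Complex.sq_norm]
      _ = (2 * Real.pi : ℂ) * ∑' n : ℤ, ((‖c n‖^2 : ℝ) : ℂ) := stepB
      _ = (((2 * Real.pi) * ∑' n : ℤ, ‖c n‖^2 : ℝ) : ℂ) := by
          rw [Complex.ofReal_mul, Complex.ofReal_tsum]
          norm_num
  exact_mod_cast hfinal

/-- Change of variables to polar coordinates for lower integrals. -/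
lemma lintegral_polar (s : Set (ℝ × ℝ)) (hs : MeasurableSet s)
    (hsub : s ⊆ polarCoord.target) (F : ℂ → ℝ≥0∞) :
    ∫⁻ z in Complex.polarCoord.symm '' s, F z
      = ∫⁻ p in s, ENNReal.ofReal p.1 * F (Complex.polarCoord.symm p) := by
  set B : ℝ × ℝ → ℝ × ℝ →L[ℝ] ℝ × ℝ := fun p =>
    LinearMap.toContinuousLinearMap (Matrix.toLin (Module.Basis.finTwoProd ℝ) (Module.Basis.finTwoProd ℝ)
      !![Real.cos p.2, -p.1 * Real.sin p.2; Real.sin p.2, p.1 * Real.cos p.2]) with hB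
  have B_det : ∀ p, (B p).det = p.1 := by
    intro p
    conv_rhs => rw [← one_mul p.1, ← Real.cos_sq_add_sin_sq p.2]
    simp only [hB, neg_mul, LinearMap.det_toContinuousLinearMap, LinearMap.det_toLin,
      Matrix.det_fin_two_of, sub_neg_eq_add]
    ring
  have hder : ∀ p ∈ s, HasFDerivWithinAt polarCoord.symm (B p) s p := fun p _ =>
    (hasFDerivAt_polarCoord_symm p).hasFDerivWithinAt
  have hinj : Set.InjOn polarCoord.symm s := by
    have h := polarCoord.symm.injOn
    rw [polarCoord.symm_source] at h
    exact h.mono hsub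
  have hmp : MeasurePreserving (Complex.measurableEquivRealProd.symm) volume volume :=
    Complex.volume_preserving_equiv_real_prod.symm
  have himg : Complex.polarCoord.symm '' s
      = Complex.measurableEquivRealProd.symm '' (polarCoord.symm '' s) := by
    rw [← Set.image_comp]
    rfl
  calc ∫⁻ z in Complex.polarCoord.symm '' s, F z
      = ∫⁻ z in Complex.measurableEquivRealProd.symm '' (polarCoord.symm '' s), F z := by
        rw [himg]
    _ = ∫⁻ x in polarCoord.symm '' s, F (Complex.measurableEquivRealProd.symm x) :=
        (hmp.setLIntegral_comp_emb
          Complex.measurableEquivRealProd.symm.measurableEmbedding F _).symm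
    _ = ∫⁻ p in s, ENNReal.ofReal |(B p).det|
          * F (Complex.measurableEquivRealProd.symm (polarCoord.symm p)) :=
        lintegral_image_eq_lintegral_abs_det_fderiv_mul volume hs hder hinj _
    _ = ∫⁻ p in s, ENNReal.ofReal p.1 * F (Complex.polarCoord.symm p) := by
        refine setLIntegral_congr_fun hs (fun p hp => ?_)
        rw [B_det, abs_of_pos (hsub hp).1]
        rfl

lemma zpow_contOn (n : ℤ) {t : Set ℝ} (ht : ∀ x ∈ t, (0:ℝ) < x) :
    ContinuousOn (fun ρ : ℝ => ρ ^ n * (1 - ρ) ^ 2) t := by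
  refine ContinuousOn.mul (fun ρ hρ => ?_) (by fun_prop)
  exact (continuousAt_zpow₀ ρ n (Or.inl (ne_of_gt (ht ρ hρ)))).continuousWithinAt

lemma subst_key (n : ℤ) {r : ℝ} (hr : 1 < r) :
    (∫ σ in (1:ℝ)..r, (σ^2) ^ n * (1 - σ^2) ^ 2 * σ) = laurentI n r := by
  have h1r : (1:ℝ) ≤ r := hr.le
  have himg : ∀ σ ∈ Set.uIcc (1:ℝ) r, (0:ℝ) < σ := by
    intro σ hσ
    rw [Set.uIcc_of_le h1r] at hσ
    linarith [hσ.1]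
  have key := intervalIntegral.integral_comp_smul_deriv'' (a := (1:ℝ)) (b := r)
    (f := fun σ => σ^2) (f' := fun σ => 2*σ) (g := fun ρ : ℝ => ρ ^ n * (1 - ρ) ^ 2)
    ((continuous_pow 2).continuousOn)
    (fun x _ => by
      have h := (hasDerivAt_pow 2 x).hasDerivWithinAt (s := Set.Ioi x)
      simpa using h)
    ((continuous_const.mul continuous_id).continuousOn)
    (by
      refine zpow_contOn n (fun ρ hρ => ?_)
      obtain ⟨σ, hσ, rfl⟩ := hρ
      have := himg σ hσ
      positivity)
  norm_num at key
  have hL : (∫ σ in (1:ℝ)..r, 2 * σ * ((σ^2) ^ n * (1 - σ^2) ^ 2))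
      = 2 * ∫ σ in (1:ℝ)..r, (σ^2) ^ n * (1 - σ^2) ^ 2 * σ := by
    rw [← intervalIntegral.integral_const_mul]
    refine intervalIntegral.integral_congr (fun σ _ => ?_)
    ring
  rw [hL] at key
  rw [laurentI, ← key]
  ring

/-- The image of the open polar rectangle is the slit annulus. -/
lemma himg_eq {r : ℝ} (hr : 1 < r) :
    Complex.polarCoord.symm '' (Set.Ioo 1 r ×ˢ Set.Ioo (-Real.pi) Real.pi)
      = annulus r ∩ Complex.slitPlane := by
  ext z
  constructor
  · rintro ⟨p, hp, rfl⟩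
    have hp0 : 0 < p.1 := lt_trans one_pos hp.1.1
    have hmemtgt : p ∈ Complex.polarCoord.target := by
      rw [Complex.polarCoord_target]
      exact ⟨hp0, hp.2⟩
    have hnorm : ‖Complex.polarCoord.symm p‖ = p.1 := by
      rw [Complex.norm_polarCoord_symm, abs_of_pos hp0]
    refine ⟨⟨?_, ?_⟩, ?_⟩
    · rw [hnorm]; exact hp.1.1
    · rw [hnorm]; exact hp.1.2
    · have := Complex.polarCoord.map_target hmemtgt
      rwa [Complex.polarCoord_source] at this
  · rintro ⟨⟨h1, h2⟩, hslit⟩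
    have hzsrc : z ∈ Complex.polarCoord.source := by
      rw [Complex.polarCoord_source]; exact hslit
    refine ⟨Complex.polarCoord z, ?_, Complex.polarCoord.left_inv hzsrc⟩
    have htgt := Complex.polarCoord.map_source hzsrc
    rw [Complex.polarCoord_target] at htgt
    rw [Complex.polarCoord_apply]
    exact ⟨⟨h1, h2⟩, htgt.2⟩

lemma im_null : volume {z : ℂ | z.im = 0} = 0 := by
  have h1 : {z : ℂ | z.im = 0} = (LinearMap.ker Complex.imLm : Set ℂ) := by
    ext z; simp [LinearMap.mem_ker]
  rw [h1]
  refine Measure.addHaar_submodule volume _ ?_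
  intro h
  have : Complex.I ∈ LinearMap.ker Complex.imLm := h ▸ Submodule.mem_top
  simp [LinearMap.mem_ker] at this

end Stmt0Aux

open Stmt0Aux in
/-- If `f` is holomorphic on the annulus `𝔸_r` with Laurent expansion
`f(z) = ∑_{n ∈ ℤ} aₙ zⁿ`, then, as an identity in `[0,∞]`,
`∬_{𝔸_r} |f|² (1-|z|²)² dA = 2π ∑_{n ∈ ℤ} |aₙ|² Iₙ(r)`. -/
theorem stmt0 (r : ℝ) (hr : 1 < r) (f : ℂ → ℂ) (a : ℤ → ℂ)
    (hf : DifferentiableOn ℂ f (annulus r))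
    (ha : ∀ z ∈ annulus r, HasSum (fun n : ℤ => a n * z ^ n) (f z)) :
    (∫⁻ z in annulus r, ENNReal.ofReal (‖f z‖ ^ 2 * (1 - ‖z‖ ^ 2) ^ 2)) =
      ENNReal.ofReal (2 * Real.pi) *
        ∑' n : ℤ, ENNReal.ofReal (‖a n‖ ^ 2 * laurentI n r) := by
  have hπ : (0:ℝ) < Real.pi := Real.pi_pos
  set F : ℂ → ℝ≥0∞ := fun z => ENNReal.ofReal (‖f z‖ ^ 2 * (1 - ‖z‖ ^ 2) ^ 2) with hF_def
  set srect : Set (ℝ × ℝ) := Set.Ioo 1 r ×ˢ Set.Ioo (-Real.pi) Real.pi with hsrect_def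
  have hsrect_meas : MeasurableSet srect := (measurableSet_Ioo).prod measurableSet_Ioo
  have hsrect_sub : srect ⊆ polarCoord.target := by
    rw [polarCoord_target]
    rintro p ⟨h1, h2⟩
    exact ⟨lt_trans one_pos h1.1, h2⟩
  -- continuity of the polar map
  have hTcont : Continuous (fun p : ℝ × ℝ => (Complex.polarCoord.symm p : ℂ)) := by
    have : (fun p : ℝ × ℝ => (Complex.polarCoord.symm p : ℂ))
        = fun p => (p.1 : ℂ) * ((Real.cos p.2 : ℝ) + (Real.sin p.2 : ℝ) * Complex.I) :=
      funext Complex.polarCoord_symm_apply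
    rw [this]; fun_prop
  have hTnorm : ∀ p : ℝ × ℝ, 0 < p.1 → ‖(Complex.polarCoord.symm p : ℂ)‖ = p.1 := by
    intro p hp
    rw [Complex.norm_polarCoord_symm, abs_of_pos hp]
  have hTmem : ∀ p ∈ srect, (Complex.polarCoord.symm p : ℂ) ∈ annulus r := by
    rintro p ⟨h1, _⟩
    have h0 : 0 < p.1 := lt_trans one_pos h1.1
    exact ⟨by rw [hTnorm p h0]; exact h1.1, by rw [hTnorm p h0]; exact h1.2⟩
  -- step 1 : reduce to the slit annulus
  set Aslit : Set ℂ := annulus r ∩ Complex.slitPlane with hAslit_def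
  have hae : (annulus r : Set ℂ) =ᵐ[volume] Aslit := by
    rw [MeasureTheory.ae_eq_set]
    constructor
    · refine measure_mono_null (fun z hz => ?_) im_null
      rcases hz with ⟨hz1, hz2⟩
      have : z ∉ Complex.slitPlane := fun h => hz2 ⟨hz1, h⟩
      rw [Complex.mem_slitPlane_iff] at this
      push_neg at this
      exact this.2
    · have hempty : Aslit \ annulus r = ∅ :=
        Set.diff_eq_empty.mpr Set.inter_subset_left
      rw [hempty]
      exact measure_empty
  -- step 2 : polar coordinates
  have hstep2 : (∫⁻ z in annulus r, F z)
      = ∫⁻ p in srect, ENNReal.ofReal p.1 * F (Complex.polarCoord.symm p) := by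
    rw [setLIntegral_congr hae, hAslit_def, ← himg_eq hr]
    exact lintegral_polar srect hsrect_meas hsrect_sub F
  -- step 3 : Tonelli
  have hres : (volume : Measure (ℝ × ℝ)).restrict srect
      = (volume.restrict (Set.Ioo 1 r)).prod (volume.restrict (Set.Ioo (-Real.pi) Real.pi)) := by
    rw [Measure.prod_restrict, ← Measure.volume_eq_prod]
  have hcontOn : AEMeasurable (fun p : ℝ × ℝ => ENNReal.ofReal p.1
      * F (Complex.polarCoord.symm p)) (volume.restrict srect) := by
    have hfT : ContinuousOn (fun p : ℝ × ℝ => f (Complex.polarCoord.symm p)) srect :=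
      hf.continuousOn.comp hTcont.continuousOn hTmem
    have hreal : ContinuousOn (fun p : ℝ × ℝ =>
        ‖f (Complex.polarCoord.symm p)‖ ^ 2 * (1 - ‖(Complex.polarCoord.symm p : ℂ)‖ ^ 2) ^ 2)
        srect := (hfT.norm.pow 2).mul
          (((continuous_const.sub (hTcont.norm.pow 2)).pow 2).continuousOn)
    exact ((ENNReal.measurable_ofReal.comp measurable_fst).aemeasurable).mul
      ((ENNReal.continuous_ofReal.comp_continuousOn hreal).aemeasurable hsrect_meas)
  have hton : (∫⁻ p in srect, ENNReal.ofReal p.1 * F (Complex.polarCoord.symm p))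
      = ∫⁻ σ in Set.Ioo (1:ℝ) r, ∫⁻ θ in Set.Ioo (-Real.pi) Real.pi,
          ENNReal.ofReal σ * F (Complex.polarCoord.symm (σ, θ)) := by
    have hmeas' : AEMeasurable (fun p : ℝ × ℝ => ENNReal.ofReal p.1
        * F (Complex.polarCoord.symm p))
        ((volume.restrict (Set.Ioo 1 r)).prod (volume.restrict (Set.Ioo (-Real.pi) Real.pi))) := by
      rw [← hres]
      exact hcontOn
    calc (∫⁻ p in srect, ENNReal.ofReal p.1 * F (Complex.polarCoord.symm p))
        = ∫⁻ p, ENNReal.ofReal p.1 * F (Complex.polarCoord.symm p)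
            ∂((volume.restrict (Set.Ioo 1 r)).prod
              (volume.restrict (Set.Ioo (-Real.pi) Real.pi))) := by rw [← hres]
      _ = _ := lintegral_prod _ hmeas'
  -- step 4 : the inner integral, via Parseval
  have hinner : ∀ σ ∈ Set.Ioo (1:ℝ) r,
      (∫⁻ θ in Set.Ioo (-Real.pi) Real.pi, ENNReal.ofReal σ * F (Complex.polarCoord.symm (σ, θ)))
        = ENNReal.ofReal (2*Real.pi)
            * ∑' n : ℤ, ENNReal.ofReal (‖a n‖^2 * ((σ^2)^n * (1-σ^2)^2 * σ)) := by
    intro σ hσ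
    have hσ0 : 0 < σ := lt_trans one_pos hσ.1
    set g : ℝ → ℂ := fun θ => f (Complex.polarCoord.symm (σ, θ)) with hg_def
    set c : ℤ → ℂ := fun n => a n * ((σ:ℂ)) ^ n with hc_def
    have hmemθ : ∀ θ : ℝ, (Complex.polarCoord.symm (σ, θ) : ℂ) ∈ annulus r := by
      intro θ
      have := hTnorm (σ, θ) hσ0
      exact ⟨by rw [this]; exact hσ.1, by rw [this]; exact hσ.2⟩
    have hgc : Continuous g := by
      refine hf.continuousOn.comp_continuous ?_ hmemθ
      exact hTcont.comp (by fun_prop)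
    have hsumg : ∀ θ : ℝ, HasSum (fun n : ℤ => c n * Complex.exp (n * θ * Complex.I)) (g θ) := by
      intro θ
      have h0 := ha _ (hmemθ θ)
      have hTexp : (Complex.polarCoord.symm (σ, θ) : ℂ)
          = (σ:ℂ) * Complex.exp (θ * Complex.I) := by
        rw [Complex.polarCoord_symm_apply, Complex.exp_mul_I, Complex.ofReal_cos,
          Complex.ofReal_sin]
      have hfn : (fun n : ℤ => a n * (Complex.polarCoord.symm (σ, θ) : ℂ) ^ n)
          = fun n : ℤ => c n * Complex.exp (n * θ * Complex.I) := by
        funext n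
        rw [hTexp, mul_zpow, ← Complex.exp_int_mul, ← mul_assoc, hc_def]
        ring
      rw [← hfn]
      exact h0
    -- pointwise form of the integrand
    have hpt : ∀ θ : ℝ, ENNReal.ofReal σ * F (Complex.polarCoord.symm (σ, θ))
        = ENNReal.ofReal ((1-σ^2)^2*σ) * ENNReal.ofReal (‖g θ‖^2) := by
      intro θ
      rw [hF_def]
      simp only
      rw [hTnorm (σ, θ) hσ0, ← ENNReal.ofReal_mul hσ0.le,
        ← ENNReal.ofReal_mul (mul_nonneg (by positivity) hσ0.le)]
      congr 1
      ring
    -- summability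
    have hc_sum : Summable c := by
      have := (hsumg 0).summable
      simpa using this
    have hc2 : Summable fun n => ‖c n‖^2 := summable_sq (summable_norm_iff.mpr hc_sum)
    have hcval : ∀ n : ℤ, ‖c n‖^2 = ‖a n‖^2 * (σ^2)^n := by
      intro n
      have hn : ‖((σ:ℂ)) ^ n‖ = σ ^ n := by
        rw [norm_zpow, Complex.norm_real, Real.norm_eq_abs, abs_of_pos hσ0]
      have hsq : ((σ:ℝ) ^ n) ^ 2 = (σ^2) ^ n := by rw [sq, sq, ← mul_zpow]
      rw [hc_def]
      simp only
      rw [norm_mul, mul_pow, hn, hsq]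
    calc (∫⁻ θ in Set.Ioo (-Real.pi) Real.pi,
          ENNReal.ofReal σ * F (Complex.polarCoord.symm (σ, θ)))
        = ∫⁻ θ in Set.Ioo (-Real.pi) Real.pi,
            ENNReal.ofReal ((1-σ^2)^2*σ) * ENNReal.ofReal (‖g θ‖^2) :=
          setLIntegral_congr_fun measurableSet_Ioo
            (fun θ _ => hpt θ)
      _ = ENNReal.ofReal ((1-σ^2)^2*σ)
            * ∫⁻ θ in Set.Ioo (-Real.pi) Real.pi, ENNReal.ofReal (‖g θ‖^2) :=
          lintegral_const_mul' _ _ ENNReal.ofReal_ne_top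
      _ = ENNReal.ofReal ((1-σ^2)^2*σ)
            * ENNReal.ofReal (∫ θ in Set.Ioo (-Real.pi) Real.pi, ‖g θ‖^2) := by
          rw [← ofReal_integral_eq_lintegral_ofReal]
          · exact ((hgc.norm.pow 2).continuousOn.integrableOn_compact
              isCompact_Icc).mono_set Set.Ioo_subset_Icc_self
          · exact Filter.Eventually.of_forall fun θ => by positivity
      _ = ENNReal.ofReal ((1-σ^2)^2*σ)
            * ENNReal.ofReal (2 * Real.pi * ∑' n : ℤ, ‖c n‖^2) := by
          rw [parseval c g hgc hsumg]
      _ = ENNReal.ofReal (2*Real.pi)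
            * ∑' n : ℤ, ENNReal.ofReal (‖a n‖^2 * ((σ^2)^n * (1-σ^2)^2 * σ)) := by
          rw [ENNReal.ofReal_mul (by positivity : (0:ℝ) ≤ 2*Real.pi),
            ENNReal.ofReal_tsum_of_nonneg (fun n => by positivity) hc2,
            ← mul_assoc, mul_comm (ENNReal.ofReal ((1-σ^2)^2*σ)) (ENNReal.ofReal (2*Real.pi)),
            mul_assoc, ← ENNReal.tsum_mul_left]
          refine congrArg _ (tsum_congr fun n => ?_)
          rw [← ENNReal.ofReal_mul (mul_nonneg (by positivity) hσ0.le)]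
          congr 1
          rw [hcval n]
          ring
  -- step 5 : outer integral
  have hEcont : ∀ n : ℤ, ContinuousOn
      (fun σ : ℝ => ‖a n‖^2 * ((σ^2)^n * (1-σ^2)^2 * σ)) {σ : ℝ | 0 < σ} := by
    intro n
    have hz : ContinuousOn (fun σ : ℝ => ((σ:ℝ)^2)^n) {σ : ℝ | 0 < σ} := by
      intro σ hσ
      have h0 : (0:ℝ) < σ := hσ
      exact (ContinuousAt.comp (x := σ) (g := fun x : ℝ => x ^ n) (f := fun x : ℝ => x ^ (2:ℕ))
        (continuousAt_zpow₀ (σ^2) n (Or.inl (by positivity)))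
        ((continuous_pow 2).continuousAt)).continuousWithinAt
    exact continuousOn_const.mul ((hz.mul (by fun_prop)).mul continuousOn_id)
  have hIoo_sub : Set.Ioo (1:ℝ) r ⊆ {σ : ℝ | 0 < σ} := fun σ hσ => lt_trans one_pos hσ.1
  have hIcc_sub : Set.Icc (1:ℝ) r ⊆ {σ : ℝ | 0 < σ} := fun σ hσ => lt_of_lt_of_le one_pos hσ.1
  have hper : ∀ n : ℤ, (∫⁻ σ in Set.Ioo (1:ℝ) r,
      ENNReal.ofReal (‖a n‖^2 * ((σ^2)^n * (1-σ^2)^2 * σ)))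
        = ENNReal.ofReal (‖a n‖^2 * laurentI n r) := by
    intro n
    have hint : IntegrableOn (fun σ : ℝ => ‖a n‖^2 * ((σ^2)^n * (1-σ^2)^2 * σ))
        (Set.Ioo 1 r) :=
      (((hEcont n).mono hIcc_sub).integrableOn_compact isCompact_Icc).mono_set
        Set.Ioo_subset_Icc_self
    have hnn : 0 ≤ᵐ[volume.restrict (Set.Ioo (1:ℝ) r)]
        fun σ : ℝ => ‖a n‖^2 * ((σ^2)^n * (1-σ^2)^2 * σ) := by
      filter_upwards [ae_restrict_mem measurableSet_Ioo] with σ hσ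
      have h0 : 0 < σ := lt_trans one_pos hσ.1
      simp only [Pi.zero_apply]
      positivity
    rw [← ofReal_integral_eq_lintegral_ofReal hint hnn]
    congr 1
    rw [← integral_Ioc_eq_integral_Ioo, ← intervalIntegral.integral_of_le hr.le,
      intervalIntegral.integral_const_mul, subst_key n hr]
  -- assemble
  calc (∫⁻ z in annulus r, F z)
      = ∫⁻ σ in Set.Ioo (1:ℝ) r, ∫⁻ θ in Set.Ioo (-Real.pi) Real.pi,
          ENNReal.ofReal σ * F (Complex.polarCoord.symm (σ, θ)) := by rw [hstep2, hton]
    _ = ∫⁻ σ in Set.Ioo (1:ℝ) r, ENNReal.ofReal (2*Real.pi)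
          * ∑' n : ℤ, ENNReal.ofReal (‖a n‖^2 * ((σ^2)^n * (1-σ^2)^2 * σ)) :=
        setLIntegral_congr_fun measurableSet_Ioo
          (fun σ hσ => hinner σ hσ)
    _ = ENNReal.ofReal (2*Real.pi) * ∫⁻ σ in Set.Ioo (1:ℝ) r,
          ∑' n : ℤ, ENNReal.ofReal (‖a n‖^2 * ((σ^2)^n * (1-σ^2)^2 * σ)) :=
        lintegral_const_mul' _ _ ENNReal.ofReal_ne_top
    _ = ENNReal.ofReal (2*Real.pi) * ∑' n : ℤ, ∫⁻ σ in Set.Ioo (1:ℝ) r,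
          ENNReal.ofReal (‖a n‖^2 * ((σ^2)^n * (1-σ^2)^2 * σ)) := by
        rw [lintegral_tsum]
        intro n
        exact (ENNReal.continuous_ofReal.comp_continuousOn
          ((hEcont n).mono hIoo_sub)).aemeasurable measurableSet_Ioo
    _ = ENNReal.ofReal (2*Real.pi) * ∑' n : ℤ, ENNReal.ofReal (‖a n‖^2 * laurentI n r) :=
        congrArg _ (tsum_congr fun n => hper n)
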